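/- For every dimension d ≥ 1 and every SLKKM coloring χ : [0,1]^d → C whose range is finite, there exists a point p ∈ [0,1]^d belonging to the closures of at least d+1 color sets, i.e. |{c ∈ C : p ∈ closure(χ⁻¹(c))}| ≥ d + 1. -/

import Mathlib

open Finset

namespace KKMProof

lemma card_even_of_invol {α : Type*} [DecidableEq α] (n : ℕ) :
    ∀ (s : Finset α) (f : α → α), s.card = n → (∀ x ∈ s, f x ∈ s) →
      (∀ x ∈ s, f (f x) = x) → (∀ x ∈ s, f x ≠ x) → s.card % 2 = 0 := by
  induction n using Nat.strong_induction_on with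
  | _ n ih =>
    intro s f hcard hmem hinv hne
    rcases s.eq_empty_or_nonempty with rfl | ⟨a, ha⟩
    · simp
    · have hfa : f a ∈ s := hmem a ha
      have hane : f a ≠ a := hne a ha
      set t := (s.erase a).erase (f a) with ht
      have hts : ∀ x, x ∈ t ↔ x ∈ s ∧ x ≠ a ∧ x ≠ f a := by
        intro x
        simp only [ht, Finset.mem_erase]
        tauto
      have htcard : t.card + 2 = s.card := by
        rw [ht, Finset.card_erase_of_mem, Finset.card_erase_of_mem ha]
        · have : 1 ≤ s.card := Finset.card_pos.2 ⟨a, ha⟩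
          have h2 : f a ≠ a := hane
          have : 2 ≤ s.card := Finset.one_lt_card.2 ⟨a, ha, f a, hfa, h2.symm⟩
          omega
        · exact Finset.mem_erase.2 ⟨hane, hfa⟩
      have hmem' : ∀ x ∈ t, f x ∈ t := by
        intro x hx
        rcases (hts x).1 hx with ⟨hxs, hxa, hxfa⟩
        refine (hts (f x)).2 ⟨hmem x hxs, ?_, ?_⟩
        · intro h
          have := hinv x hxs
          rw [h] at this
          exact hxfa this.symm
        · intro h
          have := hinv x hxs
          rw [h, hinv a ha] at this
          exact hxa this.symm
      have hinv' : ∀ x ∈ t, f (f x) = x := fun x hx => hinv x ((hts x).1 hx).1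
      have hne' : ∀ x ∈ t, f x ≠ x := fun x hx => hne x ((hts x).1 hx).1
      have := ih t.card (by omega) t f rfl hmem' hinv' hne'
      omega


def vtx {d : ℕ} (b : Fin d → ℕ) (π : Equiv.Perm (Fin d)) (k : ℕ) : Fin d → ℕ :=
  fun i => b i + if ((π.symm i : ℕ) < k) then 1 else 0

def bases (d n : ℕ) : Finset (Fin d → ℕ) := Fintype.piFinset fun _ => Finset.range n

abbrev Spx (d : ℕ) := (Fin d → ℕ) × Equiv.Perm (Fin d)

def Lset {d : ℕ} (lab : (Fin d → ℕ) → ℕ) (s : Spx d) : Finset ℕ :=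
  (range (d+1)).image fun k => lab (vtx s.1 s.2 k)

def Fset {d : ℕ} (lab : (Fin d → ℕ) → ℕ) (s : Spx d) (k : ℕ) : Finset ℕ :=
  ((range (d+1)).erase k).image fun j => lab (vtx s.1 s.2 j)

def rainbows (d n : ℕ) (lab : (Fin d → ℕ) → ℕ) : Finset (Spx d) :=
  ((bases d n) ×ˢ univ).filter fun s => Lset lab s = range (d+1)

lemma rot_last {d : ℕ} : finRotate (d+1) (Fin.last d) = 0 := finRotate_last

lemma rot_symm_zero {d : ℕ} : (finRotate (d+1)).symm 0 = Fin.last d := by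
  rw [Equiv.symm_apply_eq, rot_last]

lemma rot_symm_apply {d : ℕ} (t : Fin (d+1)) (ht : (t : ℕ) ≠ 0) :
    (((finRotate (d+1)).symm t : Fin (d+1)) : ℕ) = (t : ℕ) - 1 := by
  rcases t with ⟨v, hv⟩
  have hv0 : v ≠ 0 := by simpa using ht
  have hv' : v - 1 < d := by omega
  have key : (finRotate (d+1)).symm ⟨v, hv⟩ = ⟨v-1, by omega⟩ := by
    rw [Equiv.symm_apply_eq, finRotate_of_lt hv']
    apply Fin.ext
    simp
    omega
  rw [key]

def bump {d : ℕ} (b : Fin d → ℕ) (i₀ : Fin d) : Fin d → ℕ :=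
  fun i => if i = i₀ then b i + 1 else b i

def dropp {d : ℕ} (b : Fin d → ℕ) (i₀ : Fin d) : Fin d → ℕ :=
  fun i => if i = i₀ then b i - 1 else b i

lemma mem_bases_iff {d n : ℕ} {b : Fin d → ℕ} : b ∈ bases d n ↔ ∀ i, b i < n := by
  simp [bases, Fintype.mem_piFinset]

lemma vtx_le {d n : ℕ} {b : Fin d → ℕ} (hb : ∀ i, b i < n) (π : Equiv.Perm (Fin d))
    (k : ℕ) : ∀ i, vtx b π k i ≤ n := by
  intro i
  have := hb i
  unfold vtx
  split <;> omega

lemma mul_symm_apply {d : ℕ} (π σ : Equiv.Perm (Fin d)) (i : Fin d) :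
    (π * σ).symm i = σ.symm (π.symm i) := by
  simp [Equiv.Perm.mul_def, Equiv.symm_trans_apply]

/-- dropping an interior vertex `k`: swapping positions `k-1, k` keeps all other vertices -/
lemma vtx_swap {d : ℕ} (b : Fin d → ℕ) (π : Equiv.Perm (Fin d)) (a a' : Fin d)
    (haa : (a : ℕ) + 1 = (a' : ℕ)) (j : ℕ) (hj : j ≤ (a : ℕ) ∨ (a' : ℕ) < j) :
    vtx b (π * Equiv.swap a a') j = vtx b π j := by
  funext i
  unfold vtx
  rw [mul_symm_apply, Equiv.symm_swap]
  set u := π.symm i with hu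
  have key : ((Equiv.swap a a' u : Fin d) : ℕ) < j ↔ (u : ℕ) < j := by
    rcases eq_or_ne u a with h | h
    · rw [h, Equiv.swap_apply_left]; omega
    · rcases eq_or_ne u a' with h' | h'
      · rw [h', Equiv.swap_apply_right]; omega
      · rw [Equiv.swap_apply_of_ne_of_ne h h']
  rw [if_congr key rfl rfl]

/-- the `k=0 ↦ k=d+1` move -/
lemma vtx_push {d : ℕ} (b : Fin (d+1) → ℕ) (π : Equiv.Perm (Fin (d+1))) (j : ℕ)
    (hj : j ≤ d) :
    vtx (bump b (π 0)) (π * finRotate (d+1)) j = vtx b π (j+1) := by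
  funext i
  unfold vtx bump
  rw [mul_symm_apply]
  set u := π.symm i with hu
  have hiff : i = π 0 ↔ u = 0 := by
    rw [hu]
    constructor
    · intro h; rw [h, Equiv.symm_apply_apply]
    · intro h; have := congrArg π h; rw [Equiv.apply_symm_apply] at this; exact this
  rcases eq_or_ne u 0 with h | h
  · rw [if_pos (hiff.2 h), h, rot_symm_zero]
    have h1 : ¬ ((Fin.last d : ℕ) < j) := by simp; omega
    rw [if_neg h1, if_pos (by simp)]
  · rw [if_neg (fun hh => h (hiff.1 hh))]
    have hune : (u : ℕ) ≠ 0 := fun hh => h (Fin.ext hh)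
    have hv : (((finRotate (d+1)).symm u : Fin (d+1)) : ℕ) = (u : ℕ) - 1 :=
      rot_symm_apply u hune
    rw [if_congr (by rw [hv]; omega : (((finRotate (d+1)).symm u : Fin (d+1)) : ℕ) < j ↔ (u : ℕ) < j + 1) rfl rfl]

def pushS {d : ℕ} (s : Spx (d+1)) : Spx (d+1) := (bump s.1 (s.2 0), s.2 * finRotate (d+1))

def pullS {d : ℕ} (s : Spx (d+1)) : Spx (d+1) :=
  (dropp s.1 (s.2 (Fin.last d)), s.2 * (finRotate (d+1))⁻¹)

lemma pull_push {d : ℕ} (s : Spx (d+1)) : pullS (pushS s) = s := by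
  rcases s with ⟨b, π⟩
  unfold pullS pushS
  have h1 : (π * finRotate (d+1)) (Fin.last d) = π 0 := by
    simp [Equiv.Perm.mul_def, rot_last]
  rw [h1]
  have h2 : π * finRotate (d+1) * (finRotate (d+1))⁻¹ = π := mul_inv_cancel_right π (finRotate (d+1))
  rw [h2]
  congr 1
  funext i
  unfold dropp bump
  by_cases h : i = π 0 <;> simp [h]

lemma push_pull {d : ℕ} (s : Spx (d+1)) (h : 1 ≤ s.1 (s.2 (Fin.last d))) :
    pushS (pullS s) = s := by
  rcases s with ⟨b, π⟩
  unfold pullS pushS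
  have h1 : (π * (finRotate (d+1))⁻¹) 0 = π (Fin.last d) := by
    have : (finRotate (d+1))⁻¹ (0 : Fin (d+1)) = (finRotate (d+1)).symm 0 := rfl
    rw [Equiv.Perm.mul_apply, this, rot_symm_zero]
  rw [h1]
  have h2 : π * (finRotate (d+1))⁻¹ * finRotate (d+1) = π := inv_mul_cancel_right π (finRotate (d+1))
  rw [h2]
  congr 1
  funext i
  unfold dropp bump
  by_cases hi : i = π (Fin.last d) <;> simp [hi]
  · simp at h; omega


/-! ### door counting -/

lemma erase_eq_erase_iff {s : Finset ℕ} {a b : ℕ} (ha : a ∈ s) (hb : b ∈ s) :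
    s.erase a = s.erase b ↔ a = b := by
  constructor
  · intro h
    by_contra hne
    have hmem : b ∈ s.erase a := Finset.mem_erase.2 ⟨fun hh => hne hh.symm, hb⟩
    rw [h] at hmem
    exact (Finset.mem_erase.1 hmem).1 rfl
  · rintro rfl; rfl

lemma door_count (d t : ℕ) (ht : t ≤ d) (L : ℕ → ℕ) (hL : ∀ k, k ≤ d → L k ≤ d) :
    ((range (d+1)).filter fun k => ((range (d+1)).erase k).image L = (range (d+1)).erase t).card
      = if (range (d+1)).image L = range (d+1) then 1 else
        if (range (d+1)).image L = (range (d+1)).erase t then 2 else 0 := by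
  set A := range (d+1) with hA
  set E := A.erase t with hE
  have htA : t ∈ A := by simp [hA]; omega
  have hAcard : A.card = d + 1 := by simp [hA]
  have hEcard : E.card = d := by
    rw [hE, Finset.card_erase_of_mem htA, hAcard]; omega
  by_cases h1 : A.image L = A
  · rw [if_pos h1]
    have hinj : Set.InjOn L A := Finset.injOn_of_card_image_eq (by rw [h1])
    have htim : t ∈ A.image L := by rw [h1]; exact htA
    obtain ⟨k₀, hk₀A, hk₀⟩ := Finset.mem_image.1 htim
    have key : ∀ k ∈ A, (A.erase k).image L = (A.image L).erase (L k) := by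
      intro k hk
      ext v
      constructor
      · intro hv
        rcases Finset.mem_image.1 hv with ⟨j, hj, rfl⟩
        rcases Finset.mem_erase.1 hj with ⟨hjk, hjA⟩
        exact Finset.mem_erase.2 ⟨fun hh => hjk (hinj hjA hk hh),
          Finset.mem_image_of_mem L hjA⟩
      · intro hv
        rcases Finset.mem_erase.1 hv with ⟨hv1, hv2⟩
        rcases Finset.mem_image.1 hv2 with ⟨j, hjA, rfl⟩
        exact Finset.mem_image_of_mem L
          (Finset.mem_erase.2 ⟨fun hh => hv1 (by rw [hh]), hjA⟩)
    have hfil : A.filter (fun k => (A.erase k).image L = E) = {k₀} := by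
      ext k
      simp only [Finset.mem_filter, Finset.mem_singleton]
      constructor
      · rintro ⟨hkA, hdoor⟩
        rw [key k hkA, h1, hE] at hdoor
        have hLk : L k ∈ A := by rw [← h1]; exact Finset.mem_image_of_mem L hkA
        have hLkt := (erase_eq_erase_iff hLk htA).1 hdoor
        exact hinj hkA hk₀A (by rw [hLkt, hk₀])
      · rintro rfl
        refine ⟨hk₀A, ?_⟩
        rw [key _ hk₀A, h1, hk₀, hE]
    rw [hfil]; simp
  · rw [if_neg h1]
    by_cases h2 : A.image L = E
    · rw [if_pos h2]
      have hmaps : ∀ k ∈ A, L k ∈ E := fun k hk => by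
        rw [← h2]; exact Finset.mem_image_of_mem L hk
      obtain ⟨a, haA, b, hbA, hab, hLab⟩ :=
        Finset.exists_ne_map_eq_of_card_lt_of_maps_to (by omega : E.card < A.card) hmaps
      have door_ab : ∀ x y, x ∈ A → y ∈ A → x ≠ y → L x = L y →
          (A.erase x).image L = E := by
        intro x y hx hy hxy hLxy
        apply Finset.Subset.antisymm
        · intro v hv
          rcases Finset.mem_image.1 hv with ⟨j, hj, rfl⟩
          exact hmaps j (Finset.mem_erase.1 hj).2
        · intro v hv
          rw [← h2] at hv
          rcases Finset.mem_image.1 hv with ⟨j, hjA, rfl⟩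
          by_cases hjx : j = x
          · subst hjx
            rw [hLxy]
            exact Finset.mem_image_of_mem L (Finset.mem_erase.2 ⟨fun hh => hxy hh.symm, hy⟩)
          · exact Finset.mem_image_of_mem L (Finset.mem_erase.2 ⟨hjx, hjA⟩)
      have hfil : A.filter (fun k => (A.erase k).image L = E) = {a, b} := by
        ext k
        simp only [Finset.mem_filter, Finset.mem_insert, Finset.mem_singleton]
        constructor
        · rintro ⟨hkA, hdoor⟩
          by_contra hk
          push_neg at hk
          have hainj : a ∈ A.erase k := Finset.mem_erase.2 ⟨fun hh => hk.1 hh.symm, haA⟩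
          have hbinj : b ∈ A.erase k := Finset.mem_erase.2 ⟨fun hh => hk.2 hh.symm, hbA⟩
          have hcarderase : (A.erase k).card = d := by
            rw [Finset.card_erase_of_mem hkA, hAcard]; omega
          have hinj2 : Set.InjOn L (A.erase k) :=
            Finset.injOn_of_card_image_eq (by rw [hdoor, hEcard, hcarderase])
          exact hab (hinj2 hainj hbinj hLab)
        · rintro (rfl | rfl)
          · exact ⟨haA, door_ab k b haA hbA hab hLab⟩
          · exact ⟨hbA, door_ab k a hbA haA (Ne.symm hab) hLab.symm⟩
      rw [hfil, Finset.card_insert_of_notMem (by simpa using hab), Finset.card_singleton]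
    · rw [if_neg h2]
      rw [Finset.card_eq_zero, Finset.filter_eq_empty_iff]
      intro k hkA hdoor
      have hkd : k ≤ d := by simp [hA] at hkA; omega
      have hLk : L k ∈ A := by simp [hA]; exact hL k hkd
      have hins : A.image L = insert (L k) E := by
        conv_lhs => rw [← Finset.insert_erase hkA]
        rw [Finset.image_insert, hdoor]
      by_cases hLt : L k = t
      · exact h1 (by rw [hins, hLt, hE, Finset.insert_erase htA])
      · apply h2
        rw [hins, hE]
        exact Finset.insert_eq_self.2 (Finset.mem_erase.2 ⟨hLt, hLk⟩)

/-! ### small finset lemmas -/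

lemma erase_top_range (d : ℕ) : (range (d+2)).erase (d+1) = range (d+1) := by
  ext a; simp only [Finset.mem_erase, Finset.mem_range]; omega

lemma erase_bot_range (d : ℕ) : (range (d+1)).image (· + 1) = (range (d+2)).erase 0 := by
  ext a
  simp only [Finset.mem_image, Finset.mem_erase, Finset.mem_range]
  constructor
  · rintro ⟨b, hb, rfl⟩; omega
  · rintro ⟨h0, ha⟩; exact ⟨a - 1, by omega, by omega⟩

lemma relabel_im (d : ℕ) (S : Finset ℕ) (hS : ∀ v ∈ S, v ≤ d+1 ∧ v ≠ d) :
    S.image (fun t => if t = d+1 then d else t) = range (d+1) ↔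
      S = (range (d+2)).erase d := by
  have hdom : ∀ v w, v ≤ d+1 → v ≠ d → w ≤ d+1 → w ≠ d →
      (if v = d+1 then d else v) = (if w = d+1 then d else w) → v = w := by
    intro v w hv1 hv2 hw1 hw2 h
    split_ifs at h <;> omega
  have hEim : ((range (d+2)).erase d).image (fun t => if t = d+1 then d else t)
      = range (d+1) := by
    ext a
    simp only [Finset.mem_image, Finset.mem_erase, Finset.mem_range]
    constructor
    · rintro ⟨v, ⟨hv1, hv2⟩, rfl⟩; split_ifs <;> omega
    · intro ha
      by_cases had : a = d
      · exact ⟨d+1, ⟨by omega, by omega⟩, by rw [if_pos rfl, had]⟩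
      · exact ⟨a, ⟨had, by omega⟩, by rw [if_neg (by omega)]⟩
  constructor
  · intro h
    apply Finset.Subset.antisymm
    · intro v hv
      have hv' := hS v hv
      have : (if v = d+1 then d else v) ∈ ((range (d+2)).erase d).image
          (fun t => if t = d+1 then d else t) := by
        rw [hEim, ← h]
        exact Finset.mem_image_of_mem _ hv
      rcases Finset.mem_image.1 this with ⟨w, hw, hww⟩
      have hw' : w ≤ d+1 ∧ w ≠ d := by
        rcases Finset.mem_erase.1 hw with ⟨h1, h2⟩
        rw [Finset.mem_range] at h2
        exact ⟨by omega, h1⟩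
      exact (hdom w v hw'.1 hw'.2 hv'.1 hv'.2 hww) ▸ hw
    · intro v hv
      have hv' : v ≤ d+1 ∧ v ≠ d := by
        rcases Finset.mem_erase.1 hv with ⟨h1, h2⟩
        rw [Finset.mem_range] at h2
        exact ⟨by omega, h1⟩
      have : (if v = d+1 then d else v) ∈ S.image (fun t => if t = d+1 then d else t) := by
        rw [h, ← hEim]
        exact Finset.mem_image_of_mem _ hv
      rcases Finset.mem_image.1 this with ⟨w, hw, hww⟩
      have hw' := hS w hw
      exact (hdom w v hw'.1 hw'.2 hv'.1 hv'.2 hww) ▸ hw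
  · rintro rfl; exact hEim

/-! ### lifting permutations along `Fin.castSucc` -/

def liftPerm {d : ℕ} (σ : Equiv.Perm (Fin d)) : Equiv.Perm (Fin (d+1)) :=
  finSuccEquivLast.trans ((Equiv.optionCongr σ).trans finSuccEquivLast.symm)

@[simp] lemma liftPerm_castSucc {d : ℕ} (σ : Equiv.Perm (Fin d)) (i : Fin d) :
    liftPerm σ (Fin.castSucc i) = Fin.castSucc (σ i) := by
  simp [liftPerm]

@[simp] lemma liftPerm_last {d : ℕ} (σ : Equiv.Perm (Fin d)) :
    liftPerm σ (Fin.last d) = Fin.last d := by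
  simp [liftPerm]

@[simp] lemma liftPerm_symm_castSucc {d : ℕ} (σ : Equiv.Perm (Fin d)) (i : Fin d) :
    (liftPerm σ).symm (Fin.castSucc i) = Fin.castSucc (σ.symm i) := by
  rw [Equiv.symm_apply_eq, liftPerm_castSucc, Equiv.apply_symm_apply]

@[simp] lemma liftPerm_symm_last {d : ℕ} (σ : Equiv.Perm (Fin d)) :
    (liftPerm σ).symm (Fin.last d) = Fin.last d := by
  rw [Equiv.symm_apply_eq, liftPerm_last]

lemma vtx_lift {d : ℕ} (c : Fin d → ℕ) (σ : Equiv.Perm (Fin d)) (j : ℕ) (hj : j ≤ d) :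
    vtx (Fin.snoc c 0) (liftPerm σ) j = Fin.snoc (vtx c σ j) 0 := by
  funext i
  induction i using Fin.lastCases with
  | last =>
    unfold vtx
    rw [liftPerm_symm_last]
    simp only [Fin.snoc_last, Fin.val_last]
    rw [if_neg (by omega)]
  | cast i =>
    unfold vtx
    rw [liftPerm_symm_castSucc]
    simp only [Fin.snoc_castSucc, Fin.coe_castSucc]

lemma Fset_push {d : ℕ} (lab : (Fin (d+1) → ℕ) → ℕ) (s : Spx (d+1)) :
    Fset lab (pushS s) (d+1) = Fset lab s 0 := by
  unfold Fset
  rw [erase_top_range]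
  have h1 : ∀ j ∈ range (d+1), lab (vtx (pushS s).1 (pushS s).2 j)
      = lab (vtx s.1 s.2 (j+1)) := by
    intro j hj
    rw [Finset.mem_range] at hj
    rcases s with ⟨b, π⟩
    show lab (vtx (bump b (π 0)) (π * finRotate (d+1)) j) = _
    rw [vtx_push b π j (by omega)]
  rw [Finset.image_congr h1]
  rw [show (fun j => lab (vtx s.1 s.2 (j+1))) = (fun j => lab (vtx s.1 s.2 j)) ∘ (· + 1)
    from rfl]
  rw [← Finset.image_image, erase_bot_range]

lemma Fset_swap {d : ℕ} (lab : (Fin (d+1) → ℕ) → ℕ) (s : Spx (d+1)) (k : ℕ)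
    (hk1 : 1 ≤ k) (hk2 : k ≤ d) :
    Fset lab (s.1, s.2 * Equiv.swap (⟨k-1, by omega⟩ : Fin (d+1)) ⟨k, by omega⟩) k
      = Fset lab s k := by
  unfold Fset
  apply Finset.image_congr
  intro j hj
  rcases Finset.mem_erase.1 hj with ⟨hjk, hjr⟩
  rw [Finset.mem_range] at hjr
  show lab (vtx s.1 (s.2 * Equiv.swap _ _) j) = _
  rw [vtx_swap s.1 s.2 _ _ (by simp; omega) j (by simp; omega)]

def flip (d : ℕ) (p : Spx (d+1) × ℕ) : Spx (d+1) × ℕ :=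
  if p.2 = 0 then (pushS p.1, d+1)
  else if p.2 = d+1 then (pullS p.1, 0)
  else if h : p.2 ≤ d then
    ((p.1.1, p.1.2 * Equiv.swap (⟨p.2 - 1, by omega⟩ : Fin (d+1)) ⟨p.2, by omega⟩), p.2)
  else p

lemma flip_zero {d : ℕ} (s : Spx (d+1)) : flip d (s, 0) = (pushS s, d+1) := by
  simp [flip]

lemma flip_top {d : ℕ} (s : Spx (d+1)) : flip d (s, d+1) = (pullS s, 0) := by
  rw [flip]
  norm_num

lemma flip_mid {d : ℕ} (s : Spx (d+1)) (k : ℕ) (h1 : 1 ≤ k) (h2 : k ≤ d) :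
    flip d (s, k) =
      ((s.1, s.2 * Equiv.swap (⟨k-1, by omega⟩ : Fin (d+1)) ⟨k, by omega⟩), k) := by
  rw [flip]
  rw [if_neg (by omega : ¬ (s, k).2 = 0), if_neg (by omega : ¬ (s, k).2 = d+1),
    dif_pos (h2 : (s, k).2 ≤ d)]

/-! ### the cubical Sperner lemma -/

theorem sperner : ∀ (d n : ℕ) (lab : (Fin d → ℕ) → ℕ), 1 ≤ n →
    (∀ x : Fin d → ℕ, (∀ i, x i ≤ n) → lab x ≤ d) →
    (∀ x : Fin d → ℕ, (∀ i, x i ≤ n) → ∀ i : Fin d, x i = 0 → lab x ≠ (i : ℕ)) →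
    (∀ x : Fin d → ℕ, (∀ i, x i ≤ n) → ∀ i : Fin d, x i = n → lab x ≠ d) →
    (rainbows d n lab).card % 2 = 1 := by
  intro d
  induction d with
  | zero =>
    intro n lab hn hbound hbot htop
    have hall : rainbows 0 n lab = (bases 0 n) ×ˢ univ := by
      unfold rainbows
      apply Finset.filter_true_of_mem
      intro s hs
      unfold Lset
      have h0 : lab (vtx s.1 s.2 0) = 0 :=
        Nat.le_zero.1 (hbound _ (fun i => i.elim0))
      rw [show range (0+1) = {0} from rfl]
      rw [Finset.image_singleton, h0]
    rw [hall, Finset.card_product]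
    have h1 : (bases 0 n).card = 1 := by
      rw [bases, Fintype.card_piFinset]
      simp
    have h2 : (univ : Finset (Equiv.Perm (Fin 0))).card = 1 := by
      simp [Finset.card_univ]
    rw [h1, h2]
  | succ d ih =>
    intro n lab hn hbound hbot htop
    -- validity of grid points of simplices
    have hvalid : ∀ s : Spx (d+1), s.1 ∈ bases (d+1) n → ∀ k, ∀ i, vtx s.1 s.2 k i ≤ n :=
      fun s hs k => vtx_le (mem_bases_iff.1 hs) s.2 k
    set E : Finset ℕ := (range (d+2)).erase d with hE
    set simps : Finset (Spx (d+1)) := (bases (d+1) n) ×ˢ univ with hsimps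
    set doorF : Finset (Spx (d+1) × ℕ) :=
      (simps ×ˢ range (d+2)).filter (fun p => Fset lab p.1 p.2 = E) with hdoorF
    have mem_doorF : ∀ p : Spx (d+1) × ℕ, p ∈ doorF ↔
        (p.1.1 ∈ bases (d+1) n ∧ p.2 < d + 2 ∧ Fset lab p.1 p.2 = E) := by
      intro p
      rw [hdoorF]
      simp only [Finset.mem_filter, Finset.mem_product, Finset.mem_range, hsimps,
        Finset.mem_univ, and_true]
      tauto
    -- Step A : doorF.card ≡ rainbow count (mod 2)
    have hfib : doorF.card = ∑ s ∈ simps, ((range (d+2)).filter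
        (fun k => Fset lab (s : Spx (d+1)) k = E)).card := by
      rw [Finset.card_eq_sum_card_fiberwise (f := Prod.fst) (t := simps)
        (fun p hp => by
          rw [hdoorF] at hp
          exact (Finset.mem_product.1 (Finset.mem_filter.1 hp).1).1)]
      apply Finset.sum_congr rfl
      intro s hs
      refine Finset.card_bij' (fun p _ => p.2) (fun k _ => (s, k)) ?hi ?hj ?li ?ri
      case hi =>
        intro p hp
        rcases Finset.mem_filter.1 hp with ⟨hp1, hp2⟩
        rw [mem_doorF] at hp1
        rw [Finset.mem_filter, Finset.mem_range]
        subst hp2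
        exact ⟨hp1.2.1, hp1.2.2⟩
      case hj =>
        intro k hk
        rcases Finset.mem_filter.1 hk with ⟨hk1, hk2⟩
        rw [Finset.mem_filter]
        refine ⟨?_, rfl⟩
        rw [mem_doorF]
        rw [hsimps] at hs
        exact ⟨(Finset.mem_product.1 hs).1, Finset.mem_range.1 hk1, hk2⟩
      case li =>
        intro p hp
        exact Prod.ext ((Finset.mem_filter.1 hp).2.symm) rfl
      case ri =>
        intro k _
        rfl

    have hcnt : ∀ s ∈ simps, ((range (d+2)).filter
        (fun k => Fset lab (s : Spx (d+1)) k = E)).card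
        = if Lset lab s = range (d+2) then 1 else if Lset lab s = E then 2 else 0 := by
      intro s hs
      rw [hsimps] at hs
      have hb := (Finset.mem_product.1 hs).1
      exact door_count (d+1) d (by omega) (fun k => lab (vtx s.1 s.2 k))
        (fun k _ => hbound _ (hvalid s hb k))
    have hstepA : doorF.card % 2 = (rainbows (d+1) n lab).card % 2 := by
      have hrb : (rainbows (d+1) n lab).card
          = ∑ s ∈ simps, if Lset lab s = range (d+2) then 1 else 0 := by
        rw [rainbows, ← hsimps, Finset.card_filter]
      rw [hfib, Finset.sum_congr rfl hcnt, hrb, Finset.sum_nat_mod,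
        Finset.sum_nat_mod _ 2 (fun s => if Lset lab s = range (d+2) then 1 else 0)]
      congr 1
      apply Finset.sum_congr rfl
      intro s _
      split_ifs <;> rfl
    -- boundary facts
    have hf1 : ∀ b (π : Equiv.Perm (Fin (d+1))), ((b,π),0) ∈ doorF → b (π 0) + 1 < n := by
      intro b π hp
      rw [mem_doorF] at hp
      obtain ⟨hb, -, hdoor⟩ := hp
      have hbv : ∀ i, b i < n := mem_bases_iff.1 hb
      by_contra hcon
      push_neg at hcon
      have hbe : b (π 0) + 1 = n := by have := hbv (π 0); omega
      have hd1 : (d+1 : ℕ) ∈ Fset lab (b,π) 0 := by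
        rw [hdoor, hE, Finset.mem_erase, Finset.mem_range]
        omega
      rcases Finset.mem_image.1 hd1 with ⟨j, hj, hlabj⟩
      rcases Finset.mem_erase.1 hj with ⟨hj0, hjr⟩
      have hx : vtx b π j (π 0) = n := by
        unfold vtx
        rw [Equiv.symm_apply_apply]
        rw [if_pos (by simp only [Fin.val_zero]; omega)]
        omega
      exact htop _ (hvalid (b,π) hb j) (π 0) hx hlabj
    have hf2 : ∀ b (π : Equiv.Perm (Fin (d+1))), ((b,π),d+1) ∈ doorF →
        ¬(π (Fin.last d) = Fin.last d ∧ b (Fin.last d) = 0) →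
        1 ≤ b (π (Fin.last d)) := by
      intro b π hp hnb
      rw [mem_doorF] at hp
      obtain ⟨hb, -, hdoor⟩ := hp
      by_contra hcon
      push_neg at hcon
      have hb0 : b (π (Fin.last d)) = 0 := by omega
      by_cases hl : π (Fin.last d) = Fin.last d
      · exact hnb ⟨hl, by rw [← hl]; exact hb0⟩
      · have hval : ((π (Fin.last d) : ℕ)) ∈ Fset lab (b,π) (d+1) := by
          rw [hdoor, hE, Finset.mem_erase, Finset.mem_range]
          have h1 : (π (Fin.last d) : ℕ) < d + 1 := (π (Fin.last d)).isLt
          have h2 : (π (Fin.last d) : ℕ) ≠ d := by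
            intro hh
            exact hl (Fin.ext (by rw [hh, Fin.val_last]))
          omega
        rcases Finset.mem_image.1 hval with ⟨j, hj, hlabj⟩
        rcases Finset.mem_erase.1 hj with ⟨hjtop, hjr⟩
        rw [Finset.mem_range] at hjr
        have hx : vtx b π j (π (Fin.last d)) = 0 := by
          unfold vtx
          rw [Equiv.symm_apply_apply]
          rw [if_neg (by rw [Fin.val_last]; omega)]
          omega
        exact hbot _ (hvalid (b,π) hb j) (π (Fin.last d)) hx hlabj
    -- the matched doors
    set Bset : Finset (Spx (d+1) × ℕ) := doorF.filter
      (fun p => p.2 = d+1 ∧ p.1.2 (Fin.last d) = Fin.last d ∧ p.1.1 (Fin.last d) = 0)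
      with hBset
    set M : Finset (Spx (d+1) × ℕ) := doorF.filter
      (fun p => ¬(p.2 = d+1 ∧ p.1.2 (Fin.last d) = Fin.last d ∧ p.1.1 (Fin.last d) = 0))
      with hM
    have hsplit : Bset.card + M.card = doorF.card :=
      Finset.card_filter_add_card_filter_not _
    -- flip maps M to M
    have hpushdoor : ∀ b (π : Equiv.Perm (Fin (d+1))), ((b,π),0) ∈ doorF →
        (pushS (b,π), (d+1:ℕ)) ∈ doorF := by
      intro b π hp
      have hf := hf1 b π hp
      rw [mem_doorF] at hp ⊢
      obtain ⟨hb, -, hdoor⟩ := hp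
      refine ⟨?_, by omega, ?_⟩
      · rw [mem_bases_iff]
        intro i
        have hbi : b i < n := mem_bases_iff.1 hb i
        show bump b (π 0) i < n
        unfold bump
        by_cases h : i = π 0
        · rw [if_pos h, h]
          exact hf
        · rw [if_neg h]
          exact hbi
      · rw [Fset_push, hdoor]
    have hmemM : ∀ p ∈ M, flip d p ∈ M := by
      rintro ⟨⟨b, π⟩, k⟩ hp
      rw [hM, Finset.mem_filter] at hp
      obtain ⟨hpd, hnB⟩ := hp
      have hk2 := (mem_doorF _ |>.1 hpd).2.1
      rcases eq_or_ne k 0 with rfl | hk0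
      · rw [flip_zero]
        rw [hM, Finset.mem_filter]
        refine ⟨hpushdoor b π hpd, ?_⟩
        rintro ⟨-, h2, h3⟩
        have h2' : (π * finRotate (d+1)) (Fin.last d) = Fin.last d := h2
        rw [Equiv.Perm.mul_apply, rot_last] at h2'
        have h3' : bump b (π 0) (Fin.last d) = 0 := h3
        unfold bump at h3'
        rw [if_pos h2'.symm] at h3'
        omega
      · rcases eq_or_ne k (d+1) with rfl | hkD
        · rw [flip_top]
          have hge := hf2 b π hpd (fun hh => hnB ⟨rfl, hh.1, hh.2⟩)
          rw [hM, Finset.mem_filter]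
          constructor
          · rw [mem_doorF] at hpd ⊢
            obtain ⟨hb, -, hdoor⟩ := hpd
            refine ⟨?_, by omega, ?_⟩
            · rw [mem_bases_iff]
              intro i
              show dropp b (π (Fin.last d)) i < n
              unfold dropp
              have hbi : b i < n := mem_bases_iff.1 hb i
              split_ifs <;> omega
            · have hpp := push_pull (b, π) hge
              have := Fset_push lab (pullS (b, π))
              rw [hpp, hdoor] at this
              exact this.symm
          · rintro ⟨h1, -⟩
            omega
        · have hk1 : 1 ≤ k := by omega
          have hkd : k ≤ d := by omega
          rw [flip_mid _ k hk1 hkd]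
          rw [hM, Finset.mem_filter]
          constructor
          · rw [mem_doorF] at hpd ⊢
            obtain ⟨hb, -, hdoor⟩ := hpd
            exact ⟨hb, by omega, by rw [Fset_swap lab (b,π) k hk1 hkd, hdoor]⟩
          · rintro ⟨h1, -⟩
            omega
    have hinvM : ∀ p ∈ M, flip d (flip d p) = p := by
      rintro ⟨⟨b, π⟩, k⟩ hp
      rw [hM, Finset.mem_filter] at hp
      obtain ⟨hpd, hnB⟩ := hp
      have hk2 := (mem_doorF _ |>.1 hpd).2.1
      rcases eq_or_ne k 0 with rfl | hk0
      · rw [flip_zero, flip_top, pull_push]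
      · rcases eq_or_ne k (d+1) with rfl | hkD
        · rw [flip_top, flip_zero, push_pull (b,π) (hf2 b π hpd
            (fun hh => hnB ⟨rfl, hh.1, hh.2⟩))]
        · have hk1 : 1 ≤ k := by omega
          have hkd : k ≤ d := by omega
          rw [flip_mid _ k hk1 hkd, flip_mid _ k hk1 hkd]
          rw [mul_assoc, Equiv.swap_mul_self, mul_one]
    have hneM : ∀ p ∈ M, flip d p ≠ p := by
      rintro ⟨⟨b, π⟩, k⟩ hp heq
      rw [hM, Finset.mem_filter] at hp
      obtain ⟨hpd, hnB⟩ := hp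
      have hk2 := (mem_doorF _ |>.1 hpd).2.1
      rcases eq_or_ne k 0 with rfl | hk0
      · rw [flip_zero] at heq
        have := congrArg Prod.snd heq
        simp at this
      · rcases eq_or_ne k (d+1) with rfl | hkD
        · rw [flip_top] at heq
          have := congrArg Prod.snd heq
          simp at this
        · have hk1 : 1 ≤ k := by omega
          have hkd : k ≤ d := by omega
          rw [flip_mid _ k hk1 hkd] at heq
          have hperm : π * Equiv.swap (⟨k-1, by omega⟩ : Fin (d+1)) ⟨k, by omega⟩ = π :=
            congrArg (fun q => q.1.2) heq
          have happ := congrArg (fun e => e (⟨k-1, by omega⟩ : Fin (d+1))) hperm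
          simp only [Equiv.Perm.mul_apply, Equiv.swap_apply_left] at happ
          have := π.injective happ
          have := congrArg Fin.val this
          simp at this
          omega
    have hMeven : M.card % 2 = 0 :=
      card_even_of_invol M.card M (flip d) rfl hmemM hinvM hneM
    -- Step C : matched doors ↔ lower-dimensional rainbows
    set lab' : (Fin d → ℕ) → ℕ :=
      fun y => if lab (Fin.snoc y 0) = d+1 then d else lab (Fin.snoc y 0) with hlab'
    have hsnoc_valid : ∀ y : Fin d → ℕ, (∀ i, y i ≤ n) →
        ∀ i, (Fin.snoc y 0 : Fin (d+1) → ℕ) i ≤ n := by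
      intro y hy i
      induction i using Fin.lastCases with
      | last => rw [Fin.snoc_last]; omega
      | cast i => rw [Fin.snoc_castSucc]; exact hy i
    have hbound' : ∀ y : Fin d → ℕ, (∀ i, y i ≤ n) → lab' y ≤ d := by
      intro y hy
      have h1 := hbound _ (hsnoc_valid y hy)
      rw [hlab']
      dsimp only
      split_ifs with h <;> omega
    have hbot' : ∀ y : Fin d → ℕ, (∀ i, y i ≤ n) → ∀ i : Fin d, y i = 0 →
        lab' y ≠ (i:ℕ) := by
      intro y hy i hyi
      have hx : (Fin.snoc y 0 : Fin (d+1) → ℕ) (Fin.castSucc i) = 0 := by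
        rw [Fin.snoc_castSucc]; exact hyi
      have h1 := hbot _ (hsnoc_valid y hy) (Fin.castSucc i) hx
      rw [Fin.coe_castSucc] at h1
      have h2 : (i:ℕ) < d := i.isLt
      rw [hlab']
      dsimp only
      split_ifs with h
      · omega
      · exact h1
    have htop' : ∀ y : Fin d → ℕ, (∀ i, y i ≤ n) → ∀ i : Fin d, y i = n →
        lab' y ≠ d := by
      intro y hy i hyi
      have hx : (Fin.snoc y 0 : Fin (d+1) → ℕ) (Fin.castSucc i) = n := by
        rw [Fin.snoc_castSucc]; exact hyi
      have h1 := htop _ (hsnoc_valid y hy) (Fin.castSucc i) hx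
      have hx0 : (Fin.snoc y 0 : Fin (d+1) → ℕ) (Fin.last d) = 0 := by
        rw [Fin.snoc_last]
      have h2 := hbot _ (hsnoc_valid y hy) (Fin.last d) hx0
      rw [Fin.val_last] at h2
      rw [hlab']
      dsimp only
      rw [if_neg h1]
      exact h2
    -- correspondence of label sets
    have hFsim : ∀ (c : Fin d → ℕ) (σ : Equiv.Perm (Fin d)),
        Fset lab ((Fin.snoc c 0 : Fin (d+1) → ℕ), liftPerm σ) (d+1)
          = (range (d+1)).image (fun j => lab (Fin.snoc (vtx c σ j) 0)) := by
      intro c σ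
      unfold Fset
      rw [erase_top_range]
      have h1 : ∀ j ∈ range (d+1), lab (vtx (Fin.snoc c 0 : Fin (d+1) → ℕ) (liftPerm σ) j)
          = lab (Fin.snoc (vtx c σ j) 0) := by
        intro j hj
        rw [Finset.mem_range] at hj
        rw [vtx_lift c σ j (by omega)]
      rw [Finset.image_congr h1]
    have hLsim : ∀ (c : Fin d → ℕ) (σ : Equiv.Perm (Fin d)),
        Lset lab' (c, σ)
          = ((range (d+1)).image (fun j => lab (Fin.snoc (vtx c σ j) 0))).image
              (fun t => if t = d+1 then d else t) := by
      intro c σ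
      unfold Lset
      rw [Finset.image_image]
      rfl
    have hiff : ∀ (c : Fin d → ℕ) (σ : Equiv.Perm (Fin d)), (∀ i, c i < n) →
        (Lset lab' (c, σ) = range (d+1) ↔
          Fset lab ((Fin.snoc c 0 : Fin (d+1) → ℕ), liftPerm σ) (d+1) = E) := by
      intro c σ hc
      rw [hLsim, hFsim, hE]
      apply relabel_im
      intro v hv
      rcases Finset.mem_image.1 hv with ⟨j, -, rfl⟩
      have hval : ∀ i, (Fin.snoc (vtx c σ j) 0 : Fin (d+1) → ℕ) i ≤ n :=
        hsnoc_valid _ (vtx_le hc σ j)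
      constructor
      · exact hbound _ hval
      · have := hbot _ hval (Fin.last d) (by rw [Fin.snoc_last])
        rwa [Fin.val_last] at this
    have hbij : (rainbows d n lab').card = Bset.card := by
      apply Finset.card_bij
        (fun q _ => (((Fin.snoc q.1 0 : Fin (d+1) → ℕ), liftPerm q.2), d+1))
      · rintro ⟨c, σ⟩ hq
        unfold rainbows at hq
        rw [Finset.mem_filter, Finset.mem_product] at hq
        obtain ⟨⟨hc, -⟩, hL⟩ := hq
        have hcv : ∀ i, c i < n := mem_bases_iff.1 hc
        rw [hBset, Finset.mem_filter]
        refine ⟨?_, rfl, liftPerm_last σ, by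
          show (Fin.snoc c 0 : Fin (d+1) → ℕ) (Fin.last d) = 0
          rw [Fin.snoc_last]⟩
        rw [mem_doorF]
        refine ⟨?_, by omega, (hiff c σ hcv).1 hL⟩
        rw [mem_bases_iff]
        show ∀ i, (Fin.snoc c 0 : Fin (d+1) → ℕ) i < n
        intro i
        induction i using Fin.lastCases with
        | last => rw [Fin.snoc_last]; omega
        | cast i => rw [Fin.snoc_castSucc]; exact hcv i
      · rintro ⟨c1, σ1⟩ h1 ⟨c2, σ2⟩ h2 heq
        simp only [Prod.mk.injEq] at heq
        obtain ⟨⟨hcc, hσσ⟩, -⟩ := heq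
        have hc : c1 = c2 := by
          have := congrArg Fin.init hcc
          rwa [Fin.init_snoc, Fin.init_snoc] at this
        have hσ : σ1 = σ2 := by
          apply Equiv.ext
          intro i
          have := congrArg (fun e => e (Fin.castSucc i)) hσσ
          simp only [liftPerm_castSucc] at this
          exact Fin.castSucc_injective d this
        rw [Prod.mk.injEq]
        exact ⟨hc, hσ⟩
      · rintro ⟨⟨b, π⟩, k⟩ hp
        rw [hBset, Finset.mem_filter] at hp
        obtain ⟨hpd, hk, hπ, hb0⟩ := hp
        have hk' : k = d+1 := hk
        have hπ' : π (Fin.last d) = Fin.last d := hπ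
        have hb0' : b (Fin.last d) = 0 := hb0
        have hne1 : ∀ i : Fin d, π (Fin.castSucc i) ≠ Fin.last d := by
          intro i h
          have h2 := π.injective (h.trans hπ'.symm)
          exact (Fin.castSucc_lt_last i).ne h2
        have hne2 : ∀ i : Fin d, π.symm (Fin.castSucc i) ≠ Fin.last d := by
          intro i h
          have h2 : Fin.castSucc i = π (Fin.last d) := by
            rw [← h, Equiv.apply_symm_apply]
          rw [hπ'] at h2
          exact (Fin.castSucc_lt_last i).ne h2
        have hli : Function.LeftInverse
            (fun i => (π.symm (Fin.castSucc i)).castPred (hne2 i))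
            (fun i => (π (Fin.castSucc i)).castPred (hne1 i)) := by
          intro i
          apply Fin.castSucc_injective d
          rw [Fin.castSucc_castPred, Fin.castSucc_castPred, Equiv.symm_apply_apply]
        have hri : Function.RightInverse
            (fun i => (π.symm (Fin.castSucc i)).castPred (hne2 i))
            (fun i => (π (Fin.castSucc i)).castPred (hne1 i)) := by
          intro i
          apply Fin.castSucc_injective d
          rw [Fin.castSucc_castPred, Fin.castSucc_castPred, Equiv.apply_symm_apply]
        set σ : Equiv.Perm (Fin d) :=
          ⟨fun i => (π (Fin.castSucc i)).castPred (hne1 i),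
            fun i => (π.symm (Fin.castSucc i)).castPred (hne2 i), hli, hri⟩ with hσdef
        have hlift : liftPerm σ = π := by
          apply Equiv.ext
          intro x
          induction x using Fin.lastCases with
          | last => rw [liftPerm_last, hπ']
          | cast i =>
            rw [liftPerm_castSucc]
            show Fin.castSucc ((π (Fin.castSucc i)).castPred (hne1 i)) = _
            rw [Fin.castSucc_castPred]
        have hcb : (Fin.snoc (Fin.init b) 0 : Fin (d+1) → ℕ) = b := by
          rw [← hb0']
          exact Fin.snoc_init_self b
        have hcv : ∀ i, Fin.init b i < n := by
          intro i
          have : b (Fin.castSucc i) < n :=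
            mem_bases_iff.1 (mem_doorF _ |>.1 hpd).1 (Fin.castSucc i)
          exact this
        refine ⟨(Fin.init b, σ), ?_, ?_⟩
        · unfold rainbows
          rw [Finset.mem_filter, Finset.mem_product]
          refine ⟨⟨mem_bases_iff.2 hcv, Finset.mem_univ _⟩, ?_⟩
          apply (hiff (Fin.init b) σ hcv).2
          rw [hcb, hlift]
          have hdoor : Fset lab (b, π) k = E := (mem_doorF _ |>.1 hpd).2.2
          rwa [hk'] at hdoor
        · rw [hcb, hlift, hk']
    have hsub := ih n lab' hn hbound' hbot' htop'
    omega

/-- existence form of the Sperner lemma -/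
theorem sperner_exists (d n : ℕ) (hn : 1 ≤ n) (lab : (Fin d → ℕ) → ℕ)
    (hbound : ∀ x : Fin d → ℕ, (∀ i, x i ≤ n) → lab x ≤ d)
    (hbot : ∀ x : Fin d → ℕ, (∀ i, x i ≤ n) → ∀ i : Fin d, x i = 0 → lab x ≠ (i : ℕ))
    (htop : ∀ x : Fin d → ℕ, (∀ i, x i ≤ n) → ∀ i : Fin d, x i = n → lab x ≠ d) :
    ∃ (b : Fin d → ℕ) (π : Equiv.Perm (Fin d)), (∀ i, b i < n) ∧
      Lset lab (b, π) = range (d+1) := by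
  have h := sperner d n lab hn hbound hbot htop
  have hne : (rainbows d n lab).Nonempty := by
    rw [← Finset.card_pos]
    omega
  obtain ⟨⟨b, π⟩, hs⟩ := hne
  unfold rainbows at hs
  rw [Finset.mem_filter, Finset.mem_product] at hs
  exact ⟨b, π, mem_bases_iff.1 hs.1.1, hs.2⟩

/-- the labels of the vertices of a rainbow simplex are injective in `k` -/
lemma rainbow_injOn {d : ℕ} {lab : (Fin d → ℕ) → ℕ} {b : Fin d → ℕ}
    {π : Equiv.Perm (Fin d)} (h : Lset lab (b, π) = range (d+1)) :
    Set.InjOn (fun k => lab (vtx b π k)) (range (d+1)) := by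
  apply Finset.injOn_of_card_image_eq
  show (Lset lab (b, π)).card = _
  rw [h]

lemma vtx_close {d : ℕ} (b : Fin d → ℕ) (π : Equiv.Perm (Fin d)) (k k' : ℕ) (i : Fin d) :
    vtx b π k i ≤ vtx b π k' i + 1 := by
  unfold vtx
  split_ifs <;> omega

end KKMProof

section Geometry

open KKMProof

variable {d : ℕ}

/-- rescaling a grid point into the cube -/
noncomputable def toCube (n : ℕ) (x : Fin d → ℕ) : Fin d → ℝ := fun i => (x i : ℝ) / n

lemma dist_div_eq (n : ℕ) (hn : 1 ≤ n) (a b : ℕ) :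
    dist ((a:ℝ)/n) ((b:ℝ)/n) = |(a:ℝ) - b| / n := by
  rw [Real.dist_eq, div_sub_div_same, abs_div]
  congr 1
  exact abs_of_nonneg (Nat.cast_nonneg n)

lemma toCube_mem (n : ℕ) (hn : 1 ≤ n) (x : Fin d → ℕ) (hx : ∀ i, x i ≤ n) :
    toCube n x ∈ Set.Icc (0 : Fin d → ℝ) 1 := by
  constructor <;> intro i
  · show (0:ℝ) ≤ (x i : ℝ) / n
    positivity
  · show (x i : ℝ) / n ≤ 1
    rw [div_le_one (by exact_mod_cast Nat.lt_of_lt_of_le Nat.zero_lt_one hn : (0:ℝ) < n)]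
    exact_mod_cast hx i

lemma dist_toCube_one {n : ℕ} (hn : 1 ≤ n) {x y : Fin d → ℕ} (hd : 1 ≤ d)
    (hx : ∀ j, x j ≤ n) (hy : ∀ j, y j ≤ n) {i : Fin d} (hxi : x i = n) (hyi : y i = 0) :
    dist (toCube n x) (toCube n y) = 1 := by
  have hnpos : (0:ℝ) < n := by exact_mod_cast Nat.lt_of_lt_of_le Nat.zero_lt_one hn
  apply le_antisymm
  · rw [dist_pi_le_iff zero_le_one]
    intro j
    rw [show toCube n x j = (x j : ℝ)/n from rfl, show toCube n y j = (y j : ℝ)/n from rfl,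
      dist_div_eq n hn]
    rw [div_le_one hnpos]
    have h1 : (x j : ℝ) ≤ n := by exact_mod_cast hx j
    have h2 : (y j : ℝ) ≤ n := by exact_mod_cast hy j
    have h3 : (0:ℝ) ≤ x j := by positivity
    have h4 : (0:ℝ) ≤ y j := by positivity
    rw [abs_le]
    constructor <;> linarith
  · calc (1:ℝ) = dist (toCube n x i) (toCube n y i) := by
          rw [show toCube n x i = (x i : ℝ)/n from rfl, show toCube n y i = (y i : ℝ)/n from rfl,
            dist_div_eq n hn, hxi, hyi]
          rw [Nat.cast_zero, sub_zero, abs_of_nonneg (Nat.cast_nonneg n)]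
          exact (div_self (ne_of_gt hnpos)).symm
        _ ≤ dist (toCube n x) (toCube n y) := dist_le_pi_dist _ _ i

lemma dist_toCube_close {n : ℕ} (hn : 1 ≤ n) {x y : Fin d → ℕ}
    (h : ∀ i, x i ≤ y i + 1 ∧ y i ≤ x i + 1) :
    dist (toCube n x) (toCube n y) ≤ 1 / n := by
  have hnpos : (0:ℝ) < n := by exact_mod_cast Nat.lt_of_lt_of_le Nat.zero_lt_one hn
  rw [dist_pi_le_iff (by positivity)]
  intro i
  rw [show toCube n x i = (x i : ℝ)/n from rfl, show toCube n y i = (y i : ℝ)/n from rfl,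
    dist_div_eq n hn, div_le_div_iff_of_pos_right hnpos]
  have h1 := (h i).1
  have h2 := (h i).2
  have h1' : (x i : ℝ) ≤ y i + 1 := by exact_mod_cast h1
  have h2' : (y i : ℝ) ≤ x i + 1 := by exact_mod_cast h2
  rw [abs_le]
  constructor <;> linarith

end Geometry

section Main
open KKMProof

theorem kkm_approx (d : ℕ) (hd : 1 ≤ d) {C : Type*} (χ : (Fin d → ℝ) → C)
    (hχ : ∀ x ∈ Set.Icc (0 : Fin d → ℝ) 1, ∀ y ∈ Set.Icc (0 : Fin d → ℝ) 1,
      dist x y = 1 → χ x ≠ χ y) (n : ℕ) (hn : 1 ≤ n) :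
    ∃ w : Fin (d+1) → (Fin d → ℝ),
      (∀ m, w m ∈ Set.Icc (0 : Fin d → ℝ) 1) ∧
      (∀ m m', m ≠ m' → χ (w m) ≠ χ (w m')) ∧
      (∀ m m', dist (w m) (w m') ≤ 1/n) := by
  classical
  set P : C → Fin d → Prop := fun c i => ∃ x : Fin d → ℕ, (∀ j, x j ≤ n) ∧
    χ (toCube n x) = c ∧ x i = 0 with hP
  set φc : C → ℕ := fun c => if h : ∃ i : Fin d, ¬ P c i then (h.choose : ℕ) else d with hφ
  set lab : (Fin d → ℕ) → ℕ := fun x => φc (χ (toCube n x)) with hlab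
  have hbound : ∀ x : Fin d → ℕ, (∀ i, x i ≤ n) → lab x ≤ d := by
    intro x _
    rw [hlab, hφ]
    dsimp only
    split_ifs with h
    · exact le_of_lt h.choose.isLt
    · exact le_refl d
  have hbot : ∀ x : Fin d → ℕ, (∀ i, x i ≤ n) → ∀ i : Fin d, x i = 0 →
      lab x ≠ (i : ℕ) := by
    intro x hx i hxi
    have hPi : P (χ (toCube n x)) i := ⟨x, hx, rfl, hxi⟩
    rw [hlab, hφ]
    dsimp only
    split_ifs with h
    · intro hval
      exact h.choose_spec (by rwa [show h.choose = i from Fin.ext hval])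
    · have : (i:ℕ) < d := i.isLt
      omega
  have htop : ∀ x : Fin d → ℕ, (∀ i, x i ≤ n) → ∀ i : Fin d, x i = n →
      lab x ≠ d := by
    intro x hx i hxi
    have hnotP : ¬ P (χ (toCube n x)) i := by
      rintro ⟨y, hy, hcy, hyi⟩
      exact hχ (toCube n x) (toCube_mem n hn x hx) (toCube n y) (toCube_mem n hn y hy)
        (dist_toCube_one hn hd hx hy hxi hyi) hcy.symm
    rw [hlab, hφ]
    dsimp only
    rw [dif_pos ⟨i, hnotP⟩]
    have : ((⟨i, hnotP⟩ : ∃ i, ¬ P (χ (toCube n x)) i).choose : ℕ) < d :=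
      (⟨i, hnotP⟩ : ∃ i, ¬ P (χ (toCube n x)) i).choose.isLt
    omega
  obtain ⟨b, π, hb, hrain⟩ := sperner_exists d n hn lab hbound hbot htop
  set w : Fin (d+1) → (Fin d → ℝ) := fun m => toCube n (vtx b π (m : ℕ)) with hw
  have hinj := rainbow_injOn hrain
  refine ⟨w, ?_, ?_, ?_⟩
  · intro m
    exact toCube_mem n hn _ (vtx_le hb π m)
  · intro m m' hmm hcc
    apply hmm
    have heq : lab (vtx b π (m:ℕ)) = lab (vtx b π (m':ℕ)) := by
      rw [hlab]
      dsimp only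
      rw [show χ (toCube n (vtx b π (m:ℕ))) = χ (toCube n (vtx b π (m':ℕ))) from hcc]
    have hm : ((m:ℕ) : ℕ) ∈ (range (d+1) : Finset ℕ) := Finset.mem_range.2 m.isLt
    have hm' : ((m':ℕ) : ℕ) ∈ (range (d+1) : Finset ℕ) := Finset.mem_range.2 m'.isLt
    exact Fin.ext (hinj hm hm' heq)
  · intro m m'
    apply dist_toCube_close hn
    intro i
    exact ⟨vtx_close b π _ _ i, vtx_close b π _ _ i⟩

end Main

/-- **KKM-Lebesgue Theorem.** Given a finite SLKKM coloring of `[0,1]^d` (finitely many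
colors are used and no two points of the cube at `ℓ∞` distance `1` get the same color),
there is a point of the cube belonging to the closures of at least `d + 1` color sets. -/
theorem kkm_lebesgue
    (d : ℕ) (hd : 1 ≤ d) (C : Type*) (χ : (Fin d → ℝ) → C)
    (hfin : (χ '' Set.Icc (0 : Fin d → ℝ) 1).Finite)
    (hχ : ∀ x ∈ Set.Icc (0 : Fin d → ℝ) 1, ∀ y ∈ Set.Icc (0 : Fin d → ℝ) 1,
      dist x y = 1 → χ x ≠ χ y) :
    ∃ p ∈ Set.Icc (0 : Fin d → ℝ) 1,
      (d + 1 : ℕ∞) ≤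
        {c : C | p ∈ closure (Set.Icc (0 : Fin d → ℝ) 1 ∩ χ ⁻¹' {c})}.encard := by
  classical
  have happ : ∀ n : ℕ, ∃ w : Fin (d+1) → (Fin d → ℝ),
      (∀ m, w m ∈ Set.Icc (0:Fin d → ℝ) 1) ∧ (∀ m m', m ≠ m' → χ (w m) ≠ χ (w m')) ∧
      (∀ m m', dist (w m) (w m') ≤ 1/((n:ℝ)+1)) := by
    intro n
    obtain ⟨w, h1, h2, h3⟩ := kkm_approx d hd χ hχ (n+1) (by omega)
    refine ⟨w, h1, h2, ?_⟩
    intro m m'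
    have := h3 m m'
    rwa [show ((n+1 : ℕ) : ℝ) = (n:ℝ)+1 by push_cast; ring] at this
  choose W hW1 hW2 hW3 using happ
  have hcomp : IsCompact (Set.Icc (0:Fin d → ℝ) 1) := isCompact_Icc
  obtain ⟨p, hp, ψ, hψmono, hψtend⟩ := hcomp.tendsto_subseq (fun n => hW1 n 0)
  refine ⟨p, hp, ?_⟩
  set Good : Set C := {c | p ∈ closure (Set.Icc (0:Fin d → ℝ) 1 ∩ χ ⁻¹' {c})} with hGood
  set Bad : Set C := (χ '' Set.Icc (0:Fin d → ℝ) 1) \ Good with hBad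
  have hBadFin : Bad.Finite := hfin.subset Set.diff_subset
  have hsep : ∀ c ∈ Bad, ∃ ε > 0, ∀ x ∈ Set.Icc (0:Fin d → ℝ) 1 ∩ χ ⁻¹' {c},
      ε ≤ dist p x := by
    intro c hc
    have hnc : p ∉ closure (Set.Icc (0:Fin d → ℝ) 1 ∩ χ ⁻¹' {c}) := hc.2
    rw [Metric.mem_closure_iff] at hnc
    push_neg at hnc
    exact hnc
  set εf : C → ℝ := fun c => if h : c ∈ Bad then (hsep c h).choose else 1 with hεf
  have hεfpos : ∀ c, 0 < εf c := by
    intro c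
    rw [hεf]
    dsimp only
    split_ifs with h
    · exact (hsep c h).choose_spec.1
    · norm_num
  have hεfsep : ∀ c, ∀ h : c ∈ Bad, ∀ x ∈ Set.Icc (0:Fin d → ℝ) 1 ∩ χ ⁻¹' {c},
      εf c ≤ dist p x := by
    intro c h
    rw [hεf]
    dsimp only
    rw [dif_pos h]
    exact (hsep c h).choose_spec.2
  obtain ⟨ε, hε, hεle⟩ : ∃ ε > 0, ∀ c ∈ Bad, ε ≤ εf c := by
    rcases hBadFin.toFinset.eq_empty_or_nonempty with he | hne
    · refine ⟨1, one_pos, fun c hc => absurd (hBadFin.mem_toFinset.2 hc) ?_⟩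
      rw [he]
      simp
    · set F := hBadFin.toFinset.image εf with hF
      have hFne : F.Nonempty := hne.image εf
      refine ⟨F.min' hFne, ?_, ?_⟩
      · obtain ⟨c, _, hcm⟩ := Finset.mem_image.1 (F.min'_mem hFne)
        rw [← hcm]
        exact hεfpos c
      · intro c hc
        exact Finset.min'_le F _ (Finset.mem_image_of_mem εf (hBadFin.mem_toFinset.2 hc))
  have h2ε : 0 < ε/2 := by linarith
  rw [Metric.tendsto_atTop] at hψtend
  obtain ⟨N1, hN1⟩ := hψtend (ε/2) h2ε
  obtain ⟨N2, hN2⟩ := exists_nat_gt (2/ε)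
  set k := max N1 N2 with hk
  set n := ψ k with hn
  have hdistp : dist (W n 0) p < ε/2 := hN1 k (le_max_left _ _)
  have hsmall : 1/((n:ℝ)+1) ≤ ε/2 := by
    have hψk : k ≤ ψ k := hψmono.le_apply
    have hk2 : N2 ≤ k := le_max_right _ _
    have h1 : (N2:ℝ) ≤ (n:ℝ) := by
      have : N2 ≤ n := le_trans hk2 hψk
      exact_mod_cast this
    have hcross : 2 < ε * ((n:ℝ)+1) := by
      rw [div_lt_iff₀ hε] at hN2
      nlinarith
    rw [div_le_div_iff₀ (by linarith : (0:ℝ) < (n:ℝ)+1) (by norm_num : (0:ℝ) < 2)]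
    nlinarith
  set cs : Fin (d+1) → C := fun m => χ (W n m) with hcs
  have hcsinj : Function.Injective cs := by
    intro m m' h
    by_contra hne
    exact hW2 n m m' hne h
  have hgood : ∀ m, cs m ∈ Good := by
    intro m
    by_contra hbad
    have hcm : cs m ∈ Bad := ⟨⟨W n m, hW1 n m, rfl⟩, hbad⟩
    have hle := hεfsep (cs m) hcm (W n m) ⟨hW1 n m, rfl⟩
    have htri : dist p (W n m) ≤ dist p (W n 0) + dist (W n 0) (W n m) :=
      dist_triangle _ _ _
    have hd1 : dist p (W n 0) < ε/2 := by rwa [dist_comm]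
    have hd2 : dist (W n 0) (W n m) ≤ ε/2 := le_trans (hW3 n 0 m) hsmall
    have := hεle (cs m) hcm
    linarith
  have hrange : Set.range cs ⊆ Good := by
    rintro _ ⟨m, rfl⟩
    exact hgood m
  have hcard : (Set.range cs).encard = ((d+1 : ℕ) : ℕ∞) := by
    rw [← Set.image_univ, Set.InjOn.encard_image (hcsinj.injOn), Set.encard_univ]
    simp [ENat.card_eq_coe_fintype_card]
  calc (d + 1 : ℕ∞) = (Set.range cs).encard := by rw [hcard]; push_cast; rfl
    _ ≤ Good.encard := Set.encard_mono hrange
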